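/- Theorem 2.1(b). Fix t ∈ ℝ. Suppose x ∈ 𝓑_{ε1,ε2}, the separation condition σ(t) ≥ 2α/(φ'_k(t) − φ'_{k−1}(t)) holds for all t and k = 1,…,K, and 2M(t)(τ0 + λ_0(t)) ≤ μ(t). Let ε̃1 satisfy M(t)(τ0 + λ_0(t)) ≤ ε̃1 ≤ μ(t) − M(t)(τ0 + λ_0(t)), and for 1 ≤ ℓ ≤ K let η̂_ℓ(t) = argmax_{η ∈ 𝓖_{t,ℓ}} |Ṽ_x(t,η)|. Then for each ℓ = 1,…,K, |η̂_ℓ(t) − φ'_ℓ(t)| ≤ (1/σ(t)) · |ĝ|^{−1}(1 − 2 err_ℓ(t)/A_ℓ(t)). -/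

import Mathlib

open MeasureTheory Real

noncomputable section

/-- The adaptive short-time Fourier transform with time-varying window width `σ`. -/
def aSTFT (x : ℝ → ℂ) (g : ℝ → ℝ) (σ : ℝ → ℝ) (t η : ℝ) : ℂ :=
  ∫ τ : ℝ, x (t + τ) * (((σ t)⁻¹ * g (τ / σ t) : ℝ) : ℂ) *
    Complex.exp (-(2 * (π : ℂ) * η * τ) * Complex.I)

/-- The Fourier transform `ĝ` of the window `g`. -/
def hatg (g : ℝ → ℝ) (ξ : ℝ) : ℂ :=
  ∫ τ : ℝ, (g τ : ℂ) * Complex.exp (-(2 * (π : ℂ) * ξ * τ) * Complex.I)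

/-- The absolute moments `I_n = ∫ |τ^n g(τ)| dτ` of the window. -/
def momentI (g : ℝ → ℝ) (n : ℕ) : ℝ := ∫ τ : ℝ, |τ| ^ n * |g τ|

/-- The `k`-th component `x_k(s) = A_k(s) e^{2πi φ_k(s)}`. -/
def xcomp (A φ : ℕ → ℝ → ℝ) (k : ℕ) (s : ℝ) : ℂ :=
  (A k s : ℂ) * Complex.exp ((2 * (π : ℂ) * φ k s) * Complex.I)

/-- `M(t) = Σ_{k=0}^K A_k(t)`. -/
def Msum (K : ℕ) (A : ℕ → ℝ → ℝ) (t : ℝ) : ℝ := ∑ k ∈ Finset.range (K + 1), A k t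

/-- `μ(t) = min_{0 ≤ k ≤ K} A_k(t)`. -/
def muMin (K : ℕ) (A : ℕ → ℝ → ℝ) (t : ℝ) : ℝ :=
  (Finset.range (K + 1)).inf' (by simp) fun k => A k t

/-- `λ_0(t) = ε1 I_1 σ(t) + π ε2 I_2 σ(t)²`. -/
def lam0 (g : ℝ → ℝ) (σ : ℝ → ℝ) (ε1 ε2 t : ℝ) : ℝ :=
  ε1 * momentI g 1 * σ t + π * ε2 * momentI g 2 * σ t ^ 2

/-- `err_ℓ(t) = M(t)λ_0(t) + Σ_{k≠ℓ} A_k(t) |ĝ(α(2|ℓ−k|−1))|`. -/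
def errl (K : ℕ) (A : ℕ → ℝ → ℝ) (g : ℝ → ℝ) (σ : ℝ → ℝ) (α ε1 ε2 : ℝ)
    (l : ℕ) (t : ℝ) : ℝ :=
  Msum K A t * lam0 g σ ε1 ε2 t +
    ∑ k ∈ (Finset.range (K + 1)).erase l,
      A k t * ‖hatg g (α * (2 * |(l : ℝ) - (k : ℝ)| - 1))‖

/-- `𝓖_t = {η : |Ṽ_x(t,η)| > ε̃1}`. -/
def Gt (x : ℝ → ℂ) (g : ℝ → ℝ) (σ : ℝ → ℝ) (t eps : ℝ) : Set ℝ :=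
  {η | eps < ‖aSTFT x g σ t η‖}

/-- `𝓖_{t,k} = {η ∈ 𝓖_t : |η − φ'_k(t)| < α/σ(t)}`. -/
def Gtk (x : ℝ → ℂ) (g : ℝ → ℝ) (σ : ℝ → ℝ) (φ : ℕ → ℝ → ℝ) (α t eps : ℝ)
    (k : ℕ) : Set ℝ :=
  {η | η ∈ Gt x g σ t eps ∧ |η - deriv (φ k) t| < α / σ t}

/-! ### Auxiliary lemmas -/

lemma norm_exp_I_one (θ : ℝ) : ‖Complex.exp ((θ:ℂ) * Complex.I)‖ = 1 := by
  rw [Complex.norm_exp_ofReal_mul_I]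

lemma norm_exp_I_sub_one (θ : ℝ) : ‖Complex.exp (θ * Complex.I) - 1‖ ≤ |θ| := by
  have h1 : Complex.exp (θ * Complex.I) - 1 = Complex.mk (Real.cos θ - 1) (Real.sin θ) := by
    rw [Complex.exp_mul_I]
    apply Complex.ext <;> simp [Complex.cos_ofReal_re, Complex.sin_ofReal_re]
  have h2 : ‖Complex.exp (θ * Complex.I) - 1‖ ^ 2 = (Real.cos θ - 1)^2 + (Real.sin θ)^2 := by
    rw [h1, ← Complex.normSq_eq_norm_sq]
    simp [Complex.normSq_mk]; ring
  have h3 := Real.sin_sq_add_cos_sq θ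
  have h4 := Real.one_sub_sq_div_two_le_cos (x := θ)
  nlinarith [norm_nonneg (Complex.exp (θ * Complex.I) - 1), abs_nonneg θ, sq_abs θ]

lemma norm_exp_I_sub_exp_I (a b : ℝ) :
    ‖Complex.exp (a * Complex.I) - Complex.exp (b * Complex.I)‖ ≤ |a - b| := by
  have : Complex.exp (a * Complex.I) - Complex.exp (b * Complex.I)
      = Complex.exp (b * Complex.I) * (Complex.exp ((a - b : ℝ) * Complex.I) - 1) := by
    rw [mul_sub, ← Complex.exp_add, mul_one]; push_cast; ring_nf
  rw [this, norm_mul, Complex.norm_exp_ofReal_mul_I, one_mul]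
  exact norm_exp_I_sub_one _

lemma taylor_bd {φ : ℝ → ℝ} {ε2 : ℝ} (hφ : ContDiff ℝ 2 φ)
    (h'' : ∀ s, |deriv (deriv φ) s| ≤ ε2) (t τ : ℝ) :
    |φ (t + τ) - φ t - deriv φ t * τ| ≤ ε2 * τ ^ 2 / 2 := by
  have hd1 : Differentiable ℝ φ := hφ.differentiable (by norm_num)
  have hc1 : ContDiff ℝ 1 (deriv φ) :=
    (contDiff_succ_iff_deriv.mp (show ContDiff ℝ (1+1 : ℕ) φ by exact_mod_cast hφ)).2.2
  have hd2 : Differentiable ℝ (deriv φ) := hc1.differentiable (by norm_num)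
  have hlip : ∀ s : ℝ, |deriv φ (t + s) - deriv φ t| ≤ ε2 * |s| := by
    intro s
    have := (convex_univ (𝕜 := ℝ) (E := ℝ)).norm_image_sub_le_of_norm_deriv_le
      (f := deriv φ) (C := ε2) (fun x _ => hd2 x) (fun x _ => h'' x)
      (Set.mem_univ t) (Set.mem_univ (t + s))
    simpa [Real.norm_eq_abs, abs_mul, mul_comm] using this
  have hderivψ : ∀ s : ℝ, HasDerivAt (fun u => φ (t + u)) (deriv φ (t + s)) s := by
    intro s
    exact HasDerivAt.comp_const_add t s (hd1 (t + s)).hasDerivAt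
  have hcont : Continuous fun s => deriv φ (t + s) := (hc1.continuous).comp (by continuity)
  have hFTC : ∫ s in (0:ℝ)..τ, deriv φ (t + s) = φ (t + τ) - φ t := by
    have := intervalIntegral.integral_eq_sub_of_hasDerivAt
      (f := fun u => φ (t + u)) (f' := fun s => deriv φ (t + s))
      (fun s _ => hderivψ s) (hcont.intervalIntegrable 0 τ)
    simpa using this
  have key : φ (t + τ) - φ t - deriv φ t * τ
      = ∫ s in (0:ℝ)..τ, (deriv φ (t + s) - deriv φ t) := by
    rw [intervalIntegral.integral_sub (hcont.intervalIntegrable 0 τ)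
      (intervalIntegrable_const), hFTC, intervalIntegral.integral_const]
    simp [mul_comm]
  rw [key, ← Real.norm_eq_abs]
  have hbd : ∀ s ∈ Set.uIcc (0:ℝ) τ, ‖deriv φ (t + s) - deriv φ t‖ ≤ ε2 * |s| :=
    fun s _ => by simpa [Real.norm_eq_abs] using hlip s
  calc ‖∫ s in (0:ℝ)..τ, (deriv φ (t + s) - deriv φ t)‖
      ≤ |(∫ s in (0:ℝ)..τ, ε2 * |s|)| := by
        apply intervalIntegral.norm_integral_le_abs_integral_norm.trans
        rcases le_total 0 τ with h | h
        · have : (∫ s in (0:ℝ)..τ, ‖deriv φ (t + s) - deriv φ t‖)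
              ≤ ∫ s in (0:ℝ)..τ, ε2 * |s| := by
            apply intervalIntegral.integral_mono_on h
              ((hcont.sub continuous_const).norm.intervalIntegrable 0 τ)
              ((continuous_const.mul continuous_abs).intervalIntegrable 0 τ)
            intro s hs; exact hbd s (by simpa [Set.uIcc_of_le h] using hs)
          have h0 : (0:ℝ) ≤ ∫ s in (0:ℝ)..τ, ‖deriv φ (t + s) - deriv φ t‖ :=
            intervalIntegral.integral_nonneg h (fun s _ => norm_nonneg _)
          rw [abs_of_nonneg h0]; exact this.trans (le_abs_self _)
        · rw [intervalIntegral.integral_symm, abs_neg, intervalIntegral.integral_symm τ 0,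
            abs_neg]
          have : (∫ s in τ..(0:ℝ), ‖deriv φ (t + s) - deriv φ t‖)
              ≤ ∫ s in τ..(0:ℝ), ε2 * |s| := by
            apply intervalIntegral.integral_mono_on h
              ((hcont.sub continuous_const).norm.intervalIntegrable τ 0)
              ((continuous_const.mul continuous_abs).intervalIntegrable τ 0)
            intro s hs; exact hbd s (by simpa [Set.uIcc_of_ge h] using hs)
          have h0 : (0:ℝ) ≤ ∫ s in τ..(0:ℝ), ‖deriv φ (t + s) - deriv φ t‖ :=
            intervalIntegral.integral_nonneg h (fun s _ => norm_nonneg _)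
          rw [abs_of_nonneg h0]; exact this.trans (le_abs_self _)
    _ ≤ ε2 * τ ^ 2 / 2 := by
        rcases le_total 0 τ with h | h
        · have : (∫ s in (0:ℝ)..τ, ε2 * |s|) = ε2 * (τ^2/2) := by
            rw [intervalIntegral.integral_const_mul]
            have : (∫ s in (0:ℝ)..τ, |s|) = ∫ s in (0:ℝ)..τ, s := by
              apply intervalIntegral.integral_congr
              intro s hs; rw [Set.uIcc_of_le h] at hs
              exact abs_of_nonneg hs.1
            rw [this, integral_id]; ring
          rw [this]
          have h2 : 0 ≤ ε2 := le_trans (abs_nonneg _) (h'' 0)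
          rw [abs_of_nonneg (by positivity)]; ring_nf; rfl
        · have : (∫ s in (0:ℝ)..τ, ε2 * |s|) = -(ε2 * (τ^2/2)) := by
            rw [intervalIntegral.integral_const_mul]
            have h1 : (∫ s in (0:ℝ)..τ, |s|) = ∫ s in (0:ℝ)..τ, -s := by
              apply intervalIntegral.integral_congr
              intro s hs; rw [Set.uIcc_of_ge h] at hs
              exact abs_of_nonpos hs.2
            rw [h1, intervalIntegral.integral_neg, integral_id]; ring
          rw [this]
          have h2 : 0 ≤ ε2 := le_trans (abs_nonneg _) (h'' 0)
          rw [abs_neg, abs_of_nonneg (by positivity)]; ring_nf; rfl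

lemma hatg_scale (g : ℝ → ℝ) {σ0 : ℝ} (hσ : 0 < σ0) (b : ℝ) :
    (∫ τ : ℝ, ((σ0⁻¹ * g (τ / σ0) : ℝ) : ℂ) * Complex.exp (-(2 * (π:ℂ) * b * τ) * Complex.I))
      = hatg g (σ0 * b) := by
  set F : ℝ → ℂ := fun u => (g u : ℂ) * Complex.exp (-(2 * (π:ℂ) * (σ0 * b) * u) * Complex.I)
    with hF
  have hne : σ0 ≠ 0 := ne_of_gt hσ
  have hne' : (σ0:ℂ) ≠ 0 := by exact_mod_cast hne
  have h1 : ∀ τ : ℝ, ((σ0⁻¹ * g (τ / σ0) : ℝ) : ℂ) * Complex.exp (-(2 * (π:ℂ) * b * τ) * Complex.I)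
      = σ0⁻¹ • F (τ / σ0) := by
    intro τ
    rw [hF]
    simp only [Complex.real_smul]
    push_cast
    have : (2 * (π:ℂ) * (σ0 * b) * (τ / σ0)) = 2 * (π:ℂ) * b * τ := by
      field_simp
    rw [this]
    ring
  simp_rw [h1]
  rw [MeasureTheory.integral_smul, MeasureTheory.Measure.integral_comp_div F σ0, smul_smul,
    abs_of_pos hσ, inv_mul_cancel₀ hne, one_smul]
  rw [hF, hatg]
  congr 1
  ext y
  push_cast
  ring

lemma moment_scale (g : ℝ → ℝ) {σ0 : ℝ} (hσ : 0 < σ0) (n : ℕ) :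
    (∫ τ : ℝ, σ0⁻¹ * |g (τ / σ0)| * |τ| ^ n) = σ0 ^ n * momentI g n := by
  set F : ℝ → ℝ := fun u => |u| ^ n * |g u| with hF
  have hne : σ0 ≠ 0 := ne_of_gt hσ
  have h1 : ∀ τ : ℝ, σ0⁻¹ * |g (τ / σ0)| * |τ| ^ n = (σ0⁻¹ * σ0 ^ n) • F (τ / σ0) := by
    intro τ
    rw [hF]
    simp only [smul_eq_mul, abs_div, div_pow, abs_of_pos hσ]
    field_simp
  simp_rw [h1]
  rw [MeasureTheory.integral_smul, MeasureTheory.Measure.integral_comp_div F σ0,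
    abs_of_pos hσ, smul_smul, smul_eq_mul]
  rw [show σ0⁻¹ * σ0 ^ n * σ0 = σ0 ^ n by field_simp]
  rfl

lemma hatg_zero {g : ℝ → ℝ} (hgnorm : (∫ τ : ℝ, g τ) = 1) : hatg g 0 = 1 := by
  rw [hatg]
  have : ∀ τ : ℝ, (g τ : ℂ) * Complex.exp (-(2 * (π : ℂ) * (0:ℝ) * τ) * Complex.I) = (g τ : ℂ) := by
    intro τ; norm_num
  simp_rw [this]
  have : (∫ τ : ℝ, ((g τ : ℝ) : ℂ)) = ((∫ τ : ℝ, g τ : ℝ) : ℂ) := integral_ofReal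
  rw [this, hgnorm]
  norm_num

lemma hatg_cont {g : ℝ → ℝ} (hgint : Integrable g) : Continuous fun ξ => hatg g ξ := by
  apply MeasureTheory.continuous_of_dominated (bound := fun τ => |g τ|)
  · intro ξ
    apply AEStronglyMeasurable.mul
    · exact (Complex.continuous_ofReal.comp_aestronglyMeasurable hgint.aestronglyMeasurable)
    · exact (Complex.continuous_exp.comp (by continuity)).aestronglyMeasurable
  · intro ξ
    filter_upwards with τ
    rw [norm_mul]
    have h1 : (-(2 * (π:ℂ) * ξ * τ) * Complex.I) = ((-(2 * π * ξ * τ) : ℝ) : ℂ) * Complex.I := by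
      push_cast; ring
    rw [h1, norm_exp_I_one, mul_one, Complex.norm_real, Real.norm_eq_abs]
  · exact hgint.abs
  · filter_upwards with τ
    apply Continuous.mul continuous_const
    exact Complex.continuous_exp.comp (by continuity)

lemma xcomp_intg (Ak φk g : ℝ → ℝ) {σ0 : ℝ} (hσ : 0 < σ0) (t η : ℝ)
    (hA : Continuous Ak) (hφ : Continuous φk) (hAb : ∃ C, ∀ s, |Ak s| ≤ C)
    (hgint : Integrable g) :
    Integrable (fun τ : ℝ =>
      ((Ak (t + τ) : ℂ) * Complex.exp ((2 * (π:ℂ) * φk (t + τ)) * Complex.I))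
      * ((σ0⁻¹ * g (τ / σ0) : ℝ) : ℂ)
      * Complex.exp (-(2 * (π:ℂ) * η * τ) * Complex.I)) := by
  have hne : σ0 ≠ 0 := ne_of_gt hσ
  set X : ℝ → ℂ := fun τ => (Ak (t + τ) : ℂ) * Complex.exp ((2 * (π:ℂ) * φk (t + τ)) * Complex.I)
    with hX
  set Wg : ℝ → ℂ := fun τ => ((σ0⁻¹ * g (τ / σ0) : ℝ) : ℂ) with hWg
  set E : ℝ → ℂ := fun τ => Complex.exp (-(2 * (π:ℂ) * η * τ) * Complex.I) with hE
  have hEnorm : ∀ τ : ℝ, ‖E τ‖ = 1 := by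
    intro τ
    simp only [hE]
    have : (-(2 * (π:ℂ) * η * τ) * Complex.I) = ((-(2 * π * η * τ) : ℝ) : ℂ) * Complex.I := by
      push_cast; ring
    rw [this, norm_exp_I_one]
  have hgs : Integrable (fun τ : ℝ => σ0⁻¹ * g (τ / σ0)) := (hgint.comp_div hne).const_mul _
  have hWgE : Integrable (fun τ => E τ * Wg τ) := by
    apply (hgs.ofReal (𝕜 := ℂ)).bdd_mul
    · exact (Complex.continuous_exp.comp (by continuity)).aestronglyMeasurable
    · exact ae_of_all _ fun τ => le_of_eq (hEnorm τ)
  have hXc : Continuous X := by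
    apply Continuous.mul
    · exact Complex.continuous_ofReal.comp (hA.comp (by continuity))
    · exact Complex.continuous_exp.comp (by continuity)
  obtain ⟨C, hC⟩ := hAb
  have hXb : ∀ τ : ℝ, ‖X τ‖ ≤ C := by
    intro τ
    simp only [hX]
    have : ((2 * (π:ℂ) * φk (t + τ)) * Complex.I) = ((2 * π * φk (t + τ) : ℝ) : ℂ) * Complex.I := by
      push_cast; ring
    rw [norm_mul, this, norm_exp_I_one, mul_one, Complex.norm_real, Real.norm_eq_abs]
    exact hC _
  have : Integrable (fun τ => X τ * (E τ * Wg τ)) :=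
    hWgE.bdd_mul hXc.aestronglyMeasurable (ae_of_all _ hXb)
  exact this.congr (ae_of_all _ fun τ => by ring)

lemma comp_est (Ak φk g : ℝ → ℝ) {σ0 : ℝ} (hσ : 0 < σ0)
    {ε1 ε2 : ℝ} (t η : ℝ)
    (hA : Continuous Ak) (hφ : Continuous φk)
    (hAb : ∃ C, ∀ s, |Ak s| ≤ C)
    (hAt : 0 ≤ Ak t)
    (hLip : ∀ τ, |Ak (t + τ) - Ak t| ≤ ε1 * |τ| * Ak t)
    (hTay : ∀ τ, |φk (t + τ) - φk t - deriv φk t * τ| ≤ ε2 * τ ^ 2 / 2)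
    (hgint : Integrable g) (hgI1 : Integrable fun τ : ℝ => τ * g τ)
    (hgI2 : Integrable fun τ : ℝ => τ ^ 2 * g τ) :
    ‖(∫ τ : ℝ, ((Ak (t + τ) : ℂ) * Complex.exp ((2 * (π:ℂ) * φk (t + τ)) * Complex.I))
          * ((σ0⁻¹ * g (τ / σ0) : ℝ) : ℂ) * Complex.exp (-(2 * (π:ℂ) * η * τ) * Complex.I))
        - (Ak t : ℂ) * Complex.exp ((2 * (π:ℂ) * φk t) * Complex.I)
          * hatg g (σ0 * (η - deriv φk t))‖
      ≤ Ak t * (ε1 * momentI g 1 * σ0 + π * ε2 * momentI g 2 * σ0 ^ 2) := by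
  have hne : σ0 ≠ 0 := ne_of_gt hσ
  set φ' := deriv φk t with hφ'
  set X : ℝ → ℂ := fun τ => (Ak (t + τ) : ℂ) * Complex.exp ((2 * (π:ℂ) * φk (t + τ)) * Complex.I)
    with hX
  set P : ℝ → ℂ := fun τ =>
    (Ak t : ℂ) * Complex.exp ((2 * (π:ℂ) * (φk t + φ' * τ)) * Complex.I) with hP
  set Wg : ℝ → ℂ := fun τ => ((σ0⁻¹ * g (τ / σ0) : ℝ) : ℂ) with hWg
  set E : ℝ → ℂ := fun τ => Complex.exp (-(2 * (π:ℂ) * η * τ) * Complex.I) with hE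
  have hEnorm : ∀ τ : ℝ, ‖E τ‖ = 1 := by
    intro τ
    simp only [hE]
    have : (-(2 * (π:ℂ) * η * τ) * Complex.I) = ((-(2 * π * η * τ) : ℝ) : ℂ) * Complex.I := by
      push_cast; ring
    rw [this, norm_exp_I_one]
  have hgs : Integrable (fun τ : ℝ => σ0⁻¹ * g (τ / σ0)) := (hgint.comp_div hne).const_mul _
  have hWgE : Integrable (fun τ => E τ * Wg τ) := by
    apply (hgs.ofReal (𝕜 := ℂ)).bdd_mul
    · exact (Complex.continuous_exp.comp (by continuity)).aestronglyMeasurable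
    · exact ae_of_all _ fun τ => le_of_eq (hEnorm τ)
  have hXc : Continuous X := by
    apply Continuous.mul
    · exact Complex.continuous_ofReal.comp (hA.comp (by continuity))
    · exact Complex.continuous_exp.comp (by continuity)
  obtain ⟨C, hC⟩ := hAb
  have hXb : ∀ τ : ℝ, ‖X τ‖ ≤ C := by
    intro τ
    simp only [hX]
    have : ((2 * (π:ℂ) * φk (t + τ)) * Complex.I) = ((2 * π * φk (t + τ) : ℝ) : ℂ) * Complex.I := by
      push_cast; ring
    rw [norm_mul, this, norm_exp_I_one, mul_one, Complex.norm_real, Real.norm_eq_abs]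
    exact hC _
  have hf : Integrable (fun τ => X τ * Wg τ * E τ) := by
    have : Integrable (fun τ => X τ * (E τ * Wg τ)) :=
      hWgE.bdd_mul hXc.aestronglyMeasurable (ae_of_all _ hXb)
    exact this.congr (ae_of_all _ fun τ => by ring)
  have hPb : ∀ τ : ℝ, ‖P τ‖ = Ak t := by
    intro τ
    simp only [hP]
    have : ((2 * (π:ℂ) * (φk t + φ' * τ)) * Complex.I)
        = ((2 * π * (φk t + φ' * τ) : ℝ) : ℂ) * Complex.I := by push_cast; ring
    rw [norm_mul, this, norm_exp_I_one, mul_one, Complex.norm_real, Real.norm_eq_abs,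
      abs_of_nonneg hAt]
  have hPcont : Continuous P := by
    apply Continuous.mul continuous_const
    exact Complex.continuous_exp.comp (by continuity)
  have hPW : Integrable (fun τ => P τ * Wg τ * E τ) := by
    have : Integrable (fun τ => P τ * (E τ * Wg τ)) :=
      hWgE.bdd_mul hPcont.aestronglyMeasurable (ae_of_all _ fun τ => le_of_eq (hPb τ))
    exact this.congr (ae_of_all _ fun τ => by ring)
  have claim1 : (∫ τ : ℝ, P τ * Wg τ * E τ)
      = (Ak t : ℂ) * Complex.exp ((2 * (π:ℂ) * φk t) * Complex.I)
        * hatg g (σ0 * (η - φ')) := by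
    have hpt : ∀ τ : ℝ, P τ * Wg τ * E τ
        = ((Ak t : ℂ) * Complex.exp ((2 * (π:ℂ) * φk t) * Complex.I))
          * (Wg τ * Complex.exp (-(2 * (π:ℂ) * (((η - φ') : ℝ) : ℂ) * τ) * Complex.I)) := by
      intro τ
      simp only [hP, hE]
      rw [show ((Ak t : ℂ) * Complex.exp ((2 * (π:ℂ) * (φk t + φ' * τ)) * Complex.I)) * Wg τ
            * Complex.exp (-(2 * (π:ℂ) * η * τ) * Complex.I)
          = (Ak t : ℂ) * Wg τ * (Complex.exp ((2 * (π:ℂ) * (φk t + φ' * τ)) * Complex.I)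
            * Complex.exp (-(2 * (π:ℂ) * η * τ) * Complex.I)) by ring]
      rw [← Complex.exp_add]
      rw [show ((Ak t : ℂ) * Complex.exp ((2 * (π:ℂ) * φk t) * Complex.I))
          * (Wg τ * Complex.exp (-(2 * (π:ℂ) * (((η - φ') : ℝ) : ℂ) * τ) * Complex.I))
          = (Ak t : ℂ) * Wg τ * (Complex.exp ((2 * (π:ℂ) * φk t) * Complex.I)
            * Complex.exp (-(2 * (π:ℂ) * (((η - φ') : ℝ) : ℂ) * τ) * Complex.I)) by ring]
      rw [← Complex.exp_add]
      congr 1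
      push_cast
      ring
    simp_rw [hpt]
    rw [MeasureTheory.integral_const_mul, hatg_scale g hσ (η - φ')]
  have claim2 : ∀ τ : ℝ, ‖X τ * Wg τ * E τ - P τ * Wg τ * E τ‖
      ≤ Ak t * (ε1 * (σ0⁻¹ * |g (τ / σ0)| * |τ| ^ 1)
        + (π * ε2) * (σ0⁻¹ * |g (τ / σ0)| * |τ| ^ 2)) := by
    intro τ
    have h1 : X τ * Wg τ * E τ - P τ * Wg τ * E τ = (X τ - P τ) * (Wg τ * E τ) := by ring
    rw [h1, norm_mul, norm_mul, hEnorm, mul_one]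
    have hWgn : ‖Wg τ‖ = σ0⁻¹ * |g (τ / σ0)| := by
      simp only [hWg]
      rw [Complex.norm_real, Real.norm_eq_abs, abs_mul,
        abs_of_pos (by positivity : (0:ℝ) < σ0⁻¹)]
    rw [hWgn]
    have hXPn : ‖X τ - P τ‖ ≤ Ak t * (ε1 * |τ| + π * ε2 * τ ^ 2) := by
      have hsplit : X τ - P τ
          = ((Ak (t + τ) - Ak t : ℝ) : ℂ) * Complex.exp ((2 * (π:ℂ) * φk (t + τ)) * Complex.I)
            + (Ak t : ℂ) * (Complex.exp ((2 * (π:ℂ) * φk (t + τ)) * Complex.I)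
              - Complex.exp ((2 * (π:ℂ) * (φk t + φ' * τ)) * Complex.I)) := by
        simp only [hX, hP]; push_cast; ring
      rw [hsplit]
      apply (norm_add_le _ _).trans
      have e1 : ‖((Ak (t + τ) - Ak t : ℝ) : ℂ)
            * Complex.exp ((2 * (π:ℂ) * φk (t + τ)) * Complex.I)‖
          ≤ ε1 * |τ| * Ak t := by
        rw [norm_mul]
        have : ((2 * (π:ℂ) * φk (t + τ)) * Complex.I)
            = ((2 * π * φk (t + τ) : ℝ) : ℂ) * Complex.I := by push_cast; ring
        rw [this, norm_exp_I_one, mul_one, Complex.norm_real, Real.norm_eq_abs]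
        exact hLip τ
      have e2 : ‖(Ak t : ℂ) * (Complex.exp ((2 * (π:ℂ) * φk (t + τ)) * Complex.I)
            - Complex.exp ((2 * (π:ℂ) * (φk t + φ' * τ)) * Complex.I))‖
          ≤ Ak t * (π * ε2 * τ ^ 2) := by
        rw [norm_mul, Complex.norm_real, Real.norm_eq_abs, abs_of_nonneg hAt]
        apply mul_le_mul_of_nonneg_left _ hAt
        have h2 : ((2 * (π:ℂ) * φk (t + τ)) * Complex.I)
            = ((2 * π * φk (t + τ) : ℝ) : ℂ) * Complex.I := by push_cast; ring
        have h3 : ((2 * (π:ℂ) * (φk t + φ' * τ)) * Complex.I)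
            = ((2 * π * (φk t + φ' * τ) : ℝ) : ℂ) * Complex.I := by push_cast; ring
        rw [h2, h3]
        apply (norm_exp_I_sub_exp_I _ _).trans
        have : 2 * π * φk (t + τ) - 2 * π * (φk t + φ' * τ)
            = 2 * π * (φk (t + τ) - φk t - φ' * τ) := by ring
        rw [this, abs_mul, abs_of_nonneg (by positivity : (0:ℝ) ≤ 2 * π)]
        calc 2 * π * |φk (t + τ) - φk t - φ' * τ| ≤ 2 * π * (ε2 * τ ^ 2 / 2) := by
              apply mul_le_mul_of_nonneg_left (hTay τ) (by positivity)
          _ = π * ε2 * τ ^ 2 := by ring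
      calc _ ≤ ε1 * |τ| * Ak t + Ak t * (π * ε2 * τ ^ 2) := add_le_add e1 e2
        _ = Ak t * (ε1 * |τ| + π * ε2 * τ ^ 2) := by ring
    calc ‖X τ - P τ‖ * (σ0⁻¹ * |g (τ / σ0)|)
        ≤ (Ak t * (ε1 * |τ| + π * ε2 * τ ^ 2)) * (σ0⁻¹ * |g (τ / σ0)|) :=
          mul_le_mul_of_nonneg_right hXPn (by positivity)
      _ = Ak t * (ε1 * (σ0⁻¹ * |g (τ / σ0)| * |τ| ^ 1)
            + (π * ε2) * (σ0⁻¹ * |g (τ / σ0)| * |τ| ^ 2)) := by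
          rw [pow_one]
          rw [show |τ| ^ 2 = τ ^ 2 by rw [sq_abs]]
          ring
  have b1 : Integrable (fun τ : ℝ => σ0⁻¹ * |g (τ / σ0)| * |τ| ^ 1) := by
    have := (hgI1.comp_div hne).abs
    apply (this.const_mul (σ0⁻¹ * σ0)).congr (ae_of_all _ fun τ => ?_)
    simp only [abs_mul, abs_div, abs_of_pos hσ]
    rw [pow_one]
    field_simp
  have b2 : Integrable (fun τ : ℝ => σ0⁻¹ * |g (τ / σ0)| * |τ| ^ 2) := by
    have := (hgI2.comp_div hne).abs
    apply (this.const_mul (σ0⁻¹ * σ0 ^ 2)).congr (ae_of_all _ fun τ => ?_)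
    simp only [abs_mul, abs_div, abs_pow, abs_of_pos hσ]
    rw [div_pow]
    field_simp
  have hbint : Integrable (fun τ : ℝ =>
      Ak t * (ε1 * (σ0⁻¹ * |g (τ / σ0)| * |τ| ^ 1)
        + (π * ε2) * (σ0⁻¹ * |g (τ / σ0)| * |τ| ^ 2))) :=
    ((b1.const_mul ε1).add (b2.const_mul (π * ε2))).const_mul (Ak t)
  have hbval : (∫ τ : ℝ,
      Ak t * (ε1 * (σ0⁻¹ * |g (τ / σ0)| * |τ| ^ 1)
        + (π * ε2) * (σ0⁻¹ * |g (τ / σ0)| * |τ| ^ 2)))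
      = Ak t * (ε1 * momentI g 1 * σ0 + π * ε2 * momentI g 2 * σ0 ^ 2) := by
    rw [MeasureTheory.integral_const_mul, MeasureTheory.integral_add (b1.const_mul ε1)
      (b2.const_mul (π * ε2)), MeasureTheory.integral_const_mul, MeasureTheory.integral_const_mul,
      moment_scale g hσ 1, moment_scale g hσ 2]
    ring
  rw [← claim1, ← MeasureTheory.integral_sub hf hPW]
  exact (MeasureTheory.norm_integral_le_of_norm_le hbint (ae_of_all _ claim2)).trans hbval.le

set_option maxHeartbeats 1000000 in
theorem thm2_1b (K : ℕ) (A φ : ℕ → ℝ → ℝ) (ε1 ε2 : ℝ) (x : ℝ → ℂ)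
    (g : ℝ → ℝ) (σ : ℝ → ℝ) (τ0 α t epst : ℝ)
    (hε1 : 0 < ε1) (hε2 : 0 < ε2)
    (hAreg : ∀ k ≤ K, ContDiff ℝ 1 (A k))
    (hAbdd : ∀ k ≤ K, ∃ C, ∀ s, |A k s| ≤ C)
    (hφreg : ∀ k ≤ K, ContDiff ℝ 2 (φ k))
    (hφ0 : ∀ s, φ 0 s = 0)
    (hApos : ∀ k ≤ K, ∀ s, 0 < A k s)
    (hφ'pos : ∀ k, 1 ≤ k → k ≤ K → ∃ c > 0, ∀ s, c ≤ deriv (φ k) s)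
    (hφ'bdd : ∀ k, 1 ≤ k → k ≤ K → ∃ C, ∀ s, deriv (φ k) s ≤ C)
    (hfreq : ∃ d > 0, ∀ k, 2 ≤ k → k ≤ K → ∀ s, d ≤ deriv (φ k) s - deriv (φ (k - 1)) s)
    (hAlip : ∀ k ≤ K, ∀ s τ, |A k (s + τ) - A k s| ≤ ε1 * |τ| * A k s)
    (hφ'' : ∀ k, 1 ≤ k → k ≤ K → ∀ s, |deriv (deriv (φ k)) s| ≤ ε2)
    (hx : ∀ s, x s = ∑ k ∈ Finset.range (K + 1), xcomp A φ k s)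
    (hgint : Integrable g)
    (hgL2 : MemLp g 2 (volume : Measure ℝ))
    (hgI1 : Integrable fun τ : ℝ => τ * g τ)
    (hgI2 : Integrable fun τ : ℝ => τ ^ 2 * g τ)
    (hgnorm : (∫ τ : ℝ, g τ) = 1)
    (hgeven : ∀ ξ, ‖hatg g (-ξ)‖ = ‖hatg g ξ‖)
    (hgdec : ∀ ξ1 ξ2, 0 ≤ ξ1 → ξ1 ≤ ξ2 → ‖hatg g ξ2‖ ≤ ‖hatg g ξ1‖)
    (hτ0 : 0 < τ0) (hτ0' : τ0 < 1)
    (hα : 0 < α) (hgα : ‖hatg g α‖ = τ0)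
    (hσ : ∀ s, 0 < σ s)
    (hsep : ∀ s, ∀ k, 1 ≤ k → k ≤ K →
      2 * α / (deriv (φ k) s - deriv (φ (k - 1)) s) ≤ σ s)
    (hmain : 2 * Msum K A t * (τ0 + lam0 g σ ε1 ε2 t) ≤ muMin K A t)
    (heps1 : Msum K A t * (τ0 + lam0 g σ ε1 ε2 t) ≤ epst)
    (heps2 : epst ≤ muMin K A t - Msum K A t * (τ0 + lam0 g σ ε1 ε2 t))
    (ginv : ℝ → ℝ)
    (hginv : ∀ ξ, 0 ≤ ξ → ginv ‖hatg g ξ‖ = ξ)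
    (ηhat : ℕ → ℝ)
    (hηmem : ∀ l, 1 ≤ l → l ≤ K → ηhat l ∈ Gtk x g σ φ α t epst l)
    (hηmax : ∀ l, 1 ≤ l → l ≤ K → ∀ η ∈ Gtk x g σ φ α t epst l,
      ‖aSTFT x g σ t η‖ ≤ ‖aSTFT x g σ t (ηhat l)‖)
    :
    ∀ l, 1 ≤ l → l ≤ K →
      |ηhat l - deriv (φ l) t| ≤
        (σ t)⁻¹ * ginv (1 - 2 * errl K A g σ α ε1 ε2 l t / A l t) := by
  intro l hl1 hlK
  have hσt : 0 < σ t := hσ t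
  have hσtne : σ t ≠ 0 := ne_of_gt hσt
  have hπ : (0:ℝ) < π := Real.pi_pos
  have hlmem : l ∈ Finset.range (K + 1) := Finset.mem_range.mpr (by omega)
  have hφ0' : φ 0 = fun _ => (0:ℝ) := funext hφ0
  have hD0 : deriv (φ 0) t = 0 := by rw [hφ0']; simp
  -- Taylor bound for every component
  have hTay : ∀ k, k ≤ K → ∀ τ,
      |φ k (t + τ) - φ k t - deriv (φ k) t * τ| ≤ ε2 * τ ^ 2 / 2 := by
    intro k hk τ
    rcases Nat.eq_zero_or_pos k with hk0 | hkpos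
    · subst hk0
      rw [hφ0']
      simp only [deriv_const']
      norm_num
      positivity
    · exact taylor_bd (hφreg k hk) (hφ'' k hkpos hk) t τ
  -- integrability of each component integrand
  have hIk : ∀ k, k ≤ K → ∀ η : ℝ, Integrable (fun τ : ℝ =>
      xcomp A φ k (t + τ) * (((σ t)⁻¹ * g (τ / σ t) : ℝ) : ℂ)
        * Complex.exp (-(2 * (π:ℂ) * η * τ) * Complex.I)) := by
    intro k hk η
    have := xcomp_intg (A k) (φ k) g hσt t η (hAreg k hk).continuous
      (hφreg k hk).continuous (hAbdd k hk) hgint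
    simpa [xcomp] using this
  -- the main estimate, for arbitrary η
  have est : ∀ η : ℝ,
      ‖aSTFT x g σ t η - (A l t : ℂ) * Complex.exp ((2 * (π:ℂ) * φ l t) * Complex.I)
          * hatg g (σ t * (η - deriv (φ l) t))‖
        ≤ Msum K A t * lam0 g σ ε1 ε2 t + ∑ k ∈ (Finset.range (K + 1)).erase l,
            A k t * ‖hatg g (σ t * (η - deriv (φ k) t))‖ := by
    intro η
    set mk : ℕ → ℂ := fun k => (A k t : ℂ) * Complex.exp ((2 * (π:ℂ) * φ k t) * Complex.I)
      * hatg g (σ t * (η - deriv (φ k) t)) with hmk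
    set Ik : ℕ → ℂ := fun k => ∫ τ : ℝ, xcomp A φ k (t + τ)
      * (((σ t)⁻¹ * g (τ / σ t) : ℝ) : ℂ) * Complex.exp (-(2 * (π:ℂ) * η * τ) * Complex.I)
      with hIkdef
    have hsum : aSTFT x g σ t η = ∑ k ∈ Finset.range (K + 1), Ik k := by
      rw [aSTFT, hIkdef]
      rw [← MeasureTheory.integral_finset_sum]
      · congr 1
        funext τ
        rw [hx (t + τ), Finset.sum_mul, Finset.sum_mul]
      · intro k hk
        exact hIk k (by have := Finset.mem_range.mp hk; omega) η
    have key : aSTFT x g σ t η - mk l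
        = (∑ k ∈ Finset.range (K + 1), (Ik k - mk k))
          + ∑ k ∈ (Finset.range (K + 1)).erase l, mk k := by
      rw [hsum, Finset.sum_sub_distrib, Finset.sum_erase_eq_sub hlmem]
      ring
    have hmknorm : ∀ k, k ≤ K → ‖mk k‖ = A k t * ‖hatg g (σ t * (η - deriv (φ k) t))‖ := by
      intro k hk
      simp only [hmk]
      have : ((2 * (π:ℂ) * φ k t) * Complex.I) = ((2 * π * φ k t : ℝ) : ℂ) * Complex.I := by
        push_cast; ring
      rw [norm_mul, norm_mul, this, norm_exp_I_one, mul_one, Complex.norm_real,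
        Real.norm_eq_abs, abs_of_nonneg (hApos k hk t).le]
    have hck : ∀ k ∈ Finset.range (K + 1), ‖Ik k - mk k‖ ≤ A k t * lam0 g σ ε1 ε2 t := by
      intro k hk
      have hkK : k ≤ K := by have := Finset.mem_range.mp hk; omega
      have := comp_est (A k) (φ k) g hσt (ε1 := ε1) (ε2 := ε2) t η
        (hAreg k hkK).continuous (hφreg k hkK).continuous (hAbdd k hkK)
        (hApos k hkK t).le (hAlip k hkK t) (hTay k hkK) hgint hgI1 hgI2
      rw [lam0]
      simpa [hIkdef, hmk, xcomp] using this
    calc ‖aSTFT x g σ t η - mk l‖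
        ≤ ‖∑ k ∈ Finset.range (K + 1), (Ik k - mk k)‖
          + ‖∑ k ∈ (Finset.range (K + 1)).erase l, mk k‖ := by rw [key]; exact norm_add_le _ _
      _ ≤ (∑ k ∈ Finset.range (K + 1), A k t * lam0 g σ ε1 ε2 t)
          + ∑ k ∈ (Finset.range (K + 1)).erase l,
              A k t * ‖hatg g (σ t * (η - deriv (φ k) t))‖ := by
          apply add_le_add
          · exact (norm_sum_le _ _).trans (Finset.sum_le_sum hck)
          · apply (norm_sum_le _ _).trans
            apply Finset.sum_le_sum
            intro k hk
            have hkK : k ≤ K := by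
              have := Finset.mem_range.mp (Finset.mem_of_mem_erase hk); omega
            exact le_of_eq (hmknorm k hkK)
      _ = Msum K A t * lam0 g σ ε1 ε2 t + ∑ k ∈ (Finset.range (K + 1)).erase l,
            A k t * ‖hatg g (σ t * (η - deriv (φ k) t))‖ := by
          rw [Msum, ← Finset.sum_mul]
  -- frequency gaps
  have hstep : ∀ j, j < K → 2 * α / σ t ≤ deriv (φ (j + 1)) t - deriv (φ j) t := by
    intro j hj
    have hpos : 0 < deriv (φ (j + 1)) t - deriv (φ j) t := by
      rcases Nat.eq_zero_or_pos j with h0 | h1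
      · subst h0
        rw [hD0, sub_zero]
        obtain ⟨c, hc, hcle⟩ := hφ'pos 1 le_rfl (by omega)
        exact lt_of_lt_of_le hc (hcle t)
      · obtain ⟨d, hd, hdle⟩ := hfreq
        have h2 := hdle (j + 1) (by omega) (by omega) t
        have hj1 : (j + 1) - 1 = j := rfl
        rw [hj1] at h2
        linarith
    have h3 := hsep t (j + 1) (by omega) (by omega)
    have hj1 : (j + 1) - 1 = j := rfl
    rw [hj1] at h3
    rw [div_le_iff₀ hpos] at h3
    rw [div_le_iff₀ hσt]
    nlinarith
  have hchain : ∀ i j : ℕ, i ≤ j → j ≤ K →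
      ((j:ℝ) - (i:ℝ)) * (2 * α / σ t) ≤ deriv (φ j) t - deriv (φ i) t := by
    intro i j hij
    induction j, hij using Nat.le_induction with
    | base => intro _; simp
    | succ j hij ih =>
      intro hjK
      have h1 := ih (by omega)
      have h2 := hstep j (by omega)
      push_cast
      push_cast at h1
      nlinarith
  have hgap : ∀ k ∈ (Finset.range (K + 1)).erase l, ∀ η : ℝ,
      |η - deriv (φ l) t| < α / σ t →
      ‖hatg g (σ t * (η - deriv (φ k) t))‖
        ≤ ‖hatg g (α * (2 * |(l : ℝ) - (k : ℝ)| - 1))‖ := by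
    intro k hk η hη
    have hkK : k ≤ K := by
      have := Finset.mem_range.mp (Finset.mem_of_mem_erase hk); omega
    have hkl : k ≠ l := Finset.ne_of_mem_erase hk
    have habs := abs_lt.mp hη
    rcases lt_or_gt_of_ne hkl with hlt | hgt
    · -- k < l
      have h1 := hchain k l (le_of_lt hlt) hlK
      have h3 : (1:ℝ) ≤ (l:ℝ) - (k:ℝ) := by
        have : (k:ℝ) + 1 ≤ (l:ℝ) := by exact_mod_cast hlt
        linarith
      have e3 : σ t * (η - deriv (φ k) t)
          = σ t * (η - deriv (φ l) t) + σ t * (deriv (φ l) t - deriv (φ k) t) := by ring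
      have f1 : σ t * (((l:ℝ) - (k:ℝ)) * (2 * α / σ t))
          ≤ σ t * (deriv (φ l) t - deriv (φ k) t) := by
        apply mul_le_mul_of_nonneg_left h1 hσt.le
      have e2 : σ t * (((l:ℝ) - (k:ℝ)) * (2 * α / σ t)) = ((l:ℝ) - (k:ℝ)) * (2 * α) := by
        field_simp
        try ring
      have f2 : σ t * -(α / σ t) ≤ σ t * (η - deriv (φ l) t) :=
        mul_le_mul_of_nonneg_left habs.1.le hσt.le
      have e4 : σ t * -(α / σ t) = -α := by field_simp; try ring
      have harg : α * (2 * ((l:ℝ) - (k:ℝ)) - 1) ≤ σ t * (η - deriv (φ k) t) := by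
        rw [e3]
        rw [e2] at f1
        rw [e4] at f2
        linarith
      have habs2 : |(l:ℝ) - (k:ℝ)| = (l:ℝ) - (k:ℝ) := abs_of_nonneg (by linarith)
      rw [habs2]
      exact hgdec _ _ (mul_nonneg hα.le (by linarith)) harg
    · -- l < k
      have h1 := hchain l k (le_of_lt hgt) hkK
      have h3 : (1:ℝ) ≤ (k:ℝ) - (l:ℝ) := by
        have : (l:ℝ) + 1 ≤ (k:ℝ) := by exact_mod_cast hgt
        linarith
      have heq : ‖hatg g (σ t * (η - deriv (φ k) t))‖
          = ‖hatg g (σ t * (deriv (φ k) t - η))‖ := by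
        rw [show σ t * (η - deriv (φ k) t) = -(σ t * (deriv (φ k) t - η)) by ring]
        exact hgeven _
      rw [heq]
      have e3 : σ t * (deriv (φ k) t - η)
          = σ t * (deriv (φ l) t - η) + σ t * (deriv (φ k) t - deriv (φ l) t) := by ring
      have f1 : σ t * (((k:ℝ) - (l:ℝ)) * (2 * α / σ t))
          ≤ σ t * (deriv (φ k) t - deriv (φ l) t) := by
        apply mul_le_mul_of_nonneg_left h1 hσt.le
      have e2 : σ t * (((k:ℝ) - (l:ℝ)) * (2 * α / σ t)) = ((k:ℝ) - (l:ℝ)) * (2 * α) := by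
        field_simp
        try ring
      have f2 : σ t * -(α / σ t) ≤ σ t * (deriv (φ l) t - η) := by
        apply mul_le_mul_of_nonneg_left _ hσt.le
        linarith [habs.2]
      have e4 : σ t * -(α / σ t) = -α := by field_simp; try ring
      have harg : α * (2 * ((k:ℝ) - (l:ℝ)) - 1) ≤ σ t * (deriv (φ k) t - η) := by
        rw [e3]
        rw [e2] at f1
        rw [e4] at f2
        linarith
      have habs2 : |(l:ℝ) - (k:ℝ)| = (k:ℝ) - (l:ℝ) := by
        rw [abs_sub_comm]
        exact abs_of_nonneg (by linarith)
      rw [habs2]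
      exact hgdec _ _ (mul_nonneg hα.le (by linarith)) harg
  -- estimate specialised to the window around φ'_l
  have est2 : ∀ η : ℝ, |η - deriv (φ l) t| < α / σ t →
      ‖aSTFT x g σ t η - (A l t : ℂ) * Complex.exp ((2 * (π:ℂ) * φ l t) * Complex.I)
          * hatg g (σ t * (η - deriv (φ l) t))‖ ≤ errl K A g σ α ε1 ε2 l t := by
    intro η hη
    apply (est η).trans
    rw [errl]
    apply add_le_add le_rfl
    apply Finset.sum_le_sum
    intro k hk
    exact mul_le_mul_of_nonneg_left (hgap k hk η hη) (hApos k
      (by have := Finset.mem_range.mp (Finset.mem_of_mem_erase hk); omega) t).le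
  -- basic positivity facts
  have hAl : 0 < A l t := hApos l hlK t
  have hmom1 : 0 ≤ momentI g 1 := integral_nonneg fun τ => by positivity
  have hmom2 : 0 ≤ momentI g 2 := integral_nonneg fun τ => by positivity
  have hlam0 : 0 ≤ lam0 g σ ε1 ε2 t := by
    rw [lam0]; positivity
  have hmu_le : muMin K A t ≤ A l t := Finset.inf'_le _ hlmem
  set err := errl K A g σ α ε1 ε2 l t with herrdef
  -- bound on err
  have herr : err ≤ Msum K A t * lam0 g σ ε1 ε2 t + (Msum K A t - A l t) * τ0 := by
    rw [herrdef, errl]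
    apply add_le_add le_rfl
    have h1 : ∀ k ∈ (Finset.range (K + 1)).erase l,
        A k t * ‖hatg g (α * (2 * |(l : ℝ) - (k : ℝ)| - 1))‖ ≤ A k t * τ0 := by
      intro k hk
      have hkK : k ≤ K := by
        have := Finset.mem_range.mp (Finset.mem_of_mem_erase hk); omega
      have hkl : k ≠ l := Finset.ne_of_mem_erase hk
      apply mul_le_mul_of_nonneg_left _ (hApos k hkK t).le
      rw [← hgα]
      apply hgdec α _ hα.le
      have hone : (1:ℝ) ≤ |(l : ℝ) - (k : ℝ)| := by
        rcases lt_or_gt_of_ne hkl with h | h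
        · rw [abs_of_pos (by exact_mod_cast sub_pos.mpr (show (k:ℝ) < l by exact_mod_cast h))]
          have : (k:ℝ) + 1 ≤ (l:ℝ) := by exact_mod_cast h
          linarith
        · rw [abs_sub_comm, abs_of_pos (by
            exact_mod_cast sub_pos.mpr (show (l:ℝ) < k by exact_mod_cast h))]
          have : (l:ℝ) + 1 ≤ (k:ℝ) := by exact_mod_cast h
          linarith
      nlinarith
    apply (Finset.sum_le_sum h1).trans
    rw [← Finset.sum_mul, Finset.sum_erase_eq_sub hlmem, ← Msum]
  have herr0 : 0 ≤ err := by
    rw [herrdef, errl]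
    apply add_nonneg
    · apply mul_nonneg _ hlam0
      rw [Msum]
      apply Finset.sum_nonneg
      intro k hk
      exact (hApos k (by have := Finset.mem_range.mp hk; omega) t).le
    · apply Finset.sum_nonneg
      intro k hk
      exact mul_nonneg (hApos k
        (by have := Finset.mem_range.mp (Finset.mem_of_mem_erase hk); omega) t).le
        (norm_nonneg _)
  -- lower bound for the peak value
  have hDl_dist : |deriv (φ l) t - deriv (φ l) t| < α / σ t := by
    simp
    positivity
  have hmainDl : ‖(A l t : ℂ) * Complex.exp ((2 * (π:ℂ) * φ l t) * Complex.I)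
      * hatg g (σ t * (deriv (φ l) t - deriv (φ l) t))‖ = A l t := by
    rw [show σ t * (deriv (φ l) t - deriv (φ l) t) = 0 by ring, hatg_zero hgnorm]
    have : ((2 * (π:ℂ) * φ l t) * Complex.I) = ((2 * π * φ l t : ℝ) : ℂ) * Complex.I := by
      push_cast; ring
    rw [norm_mul, norm_mul, this, norm_exp_I_one, mul_one, norm_one, mul_one,
      Complex.norm_real, Real.norm_eq_abs, abs_of_nonneg hAl.le]
  have hVDl : A l t - err ≤ ‖aSTFT x g σ t (deriv (φ l) t)‖ := by
    have h1 := est2 (deriv (φ l) t) hDl_dist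
    have h2 := abs_norm_sub_norm_le (aSTFT x g σ t (deriv (φ l) t))
      ((A l t : ℂ) * Complex.exp ((2 * (π:ℂ) * φ l t) * Complex.I)
        * hatg g (σ t * (deriv (φ l) t - deriv (φ l) t)))
    rw [hmainDl] at h2
    have h3 := (abs_le.mp h2).1
    linarith
  -- φ'_l lies in the candidate set
  have hMsum_ge : A l t ≤ Msum K A t := by
    rw [Msum]
    apply Finset.single_le_sum (f := fun k => A k t) _ hlmem
    intro k hk
    exact (hApos k (by have := Finset.mem_range.mp hk; omega) t).le
  have hepst_lt : epst < A l t - err := by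
    have h1 : err ≤ Msum K A t * (lam0 g σ ε1 ε2 t + τ0) - A l t * τ0 := by nlinarith [herr]
    have h2 : epst ≤ A l t - Msum K A t * (τ0 + lam0 g σ ε1 ε2 t) := by linarith [heps2, hmu_le]
    nlinarith [mul_pos hAl hτ0]
  have hDl_in : deriv (φ l) t ∈ Gtk x g σ φ α t epst l := by
    constructor
    · show epst < ‖aSTFT x g σ t (deriv (φ l) t)‖
      linarith
    · exact hDl_dist
  obtain ⟨hηG, hηdist⟩ := hηmem l hl1 hlK
  have hVmax : ‖aSTFT x g σ t (deriv (φ l) t)‖ ≤ ‖aSTFT x g σ t (ηhat l)‖ :=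
    hηmax l hl1 hlK _ hDl_in
  -- upper bound at ηhat
  have hmainηhat : ‖(A l t : ℂ) * Complex.exp ((2 * (π:ℂ) * φ l t) * Complex.I)
      * hatg g (σ t * (ηhat l - deriv (φ l) t))‖
      = A l t * ‖hatg g (σ t * (ηhat l - deriv (φ l) t))‖ := by
    have : ((2 * (π:ℂ) * φ l t) * Complex.I) = ((2 * π * φ l t : ℝ) : ℂ) * Complex.I := by
      push_cast; ring
    rw [norm_mul, norm_mul, this, norm_exp_I_one, mul_one, Complex.norm_real,
      Real.norm_eq_abs, abs_of_nonneg hAl.le]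
  have hub : ‖aSTFT x g σ t (ηhat l)‖
      ≤ A l t * ‖hatg g (σ t * (ηhat l - deriv (φ l) t))‖ + err := by
    have h1 := est2 (ηhat l) hηdist
    have h2 := norm_sub_norm_le (aSTFT x g σ t (ηhat l))
      ((A l t : ℂ) * Complex.exp ((2 * (π:ℂ) * φ l t) * Complex.I)
        * hatg g (σ t * (ηhat l - deriv (φ l) t)))
    rw [hmainηhat] at h2
    linarith
  -- the normalized window value at ηhat
  have hNval : A l t - 2 * err ≤ A l t * ‖hatg g (σ t * (ηhat l - deriv (φ l) t))‖ := by
    linarith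
  have heven2 : ‖hatg g (σ t * (ηhat l - deriv (φ l) t))‖
      = ‖hatg g (σ t * |ηhat l - deriv (φ l) t|)‖ := by
    rcases le_or_gt 0 (ηhat l - deriv (φ l) t) with h | h
    · rw [abs_of_nonneg h]
    · rw [abs_of_neg h, show σ t * -(ηhat l - deriv (φ l) t)
        = -(σ t * (ηhat l - deriv (φ l) t)) by ring]
      exact (hgeven _).symm
  set B := 1 - 2 * err / A l t with hBdef
  have hNB : B ≤ ‖hatg g (σ t * |ηhat l - deriv (φ l) t|)‖ := by
    rw [← heven2, hBdef]
    have h1 : (1 - 2 * err / A l t) * A l t = A l t - 2 * err := by field_simp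
    nlinarith [hNval, hAl, h1]
  have hB2τ : 2 * τ0 ≤ B := by
    rw [hBdef]
    have h1 : 2 * err ≤ A l t * (1 - 2 * τ0) := by
      have : 2 * (Msum K A t * (lam0 g σ ε1 ε2 t + τ0)) ≤ A l t := by
        have := hmain
        nlinarith [hmu_le]
      nlinarith [herr, mul_pos hAl hτ0]
    have h2 : 2 * err / A l t ≤ 1 - 2 * τ0 := by
      rw [div_le_iff₀ hAl]
      nlinarith
    linarith
  have hξhat : σ t * |ηhat l - deriv (φ l) t| < α := by
    rw [lt_div_iff₀ hσt] at hηdist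
    nlinarith
  have hξ0 : 0 ≤ σ t * |ηhat l - deriv (φ l) t| := by positivity
  -- intermediate value theorem
  have hNcont : Continuous fun ξ => ‖hatg g ξ‖ := (hatg_cont hgint).norm
  have hsub := intermediate_value_Icc' (a := σ t * |ηhat l - deriv (φ l) t|) (b := α)
    hξhat.le hNcont.continuousOn
  have hBmem : B ∈ Set.Icc ‖hatg g α‖ ‖hatg g (σ t * |ηhat l - deriv (φ l) t|)‖ := by
    constructor
    · rw [hgα]; linarith
    · exact hNB
  obtain ⟨ξstar, hξstar_mem, hξstar_val⟩ := hsub hBmem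
  have hξstar0 : 0 ≤ ξstar := le_trans hξ0 hξstar_mem.1
  have hginvB : ginv B = ξstar := by
    rw [← hξstar_val]
    exact hginv ξstar hξstar0
  -- conclusion
  rw [hginvB]
  calc |ηhat l - deriv (φ l) t| = (σ t)⁻¹ * (σ t * |ηhat l - deriv (φ l) t|) := by
        field_simp
    _ ≤ (σ t)⁻¹ * ξstar := by
        apply mul_le_mul_of_nonneg_left hξstar_mem.1 (by positivity)
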